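/- Let p be an odd prime and let n, x be p-integral rational numbers with n(n+4x) ≢ 0 (mod p). Then ((n+4x)/p) · Σ_{k=0}^{p-1} C(2k,k) · W_k(x)/(n+4x)^k ≡ (−1)^{(p−1)/2} · W_{(p−1)/2}(−n/4) ≡ (n/p) · Σ_{k=0}^{p-1} C(2k,k)·C(3k,k)·C(6k,3k)/n^{3k} (mod p), where the Legendre symbols (·/p) are evaluated at the residue of the p-integral rational modulo p. -/

import Mathlib

/-- `Wgen n x = Σ_{k=0}^{⌊n/3⌋} C(2k,k)·C(3k,k)·C(n,3k)·x^{n-3k}`. -/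
def Wgen (n : ℕ) (x : ℚ) : ℚ :=
  ∑ k ∈ Finset.range (n / 3 + 1),
    (Nat.choose (2 * k) k : ℚ) * (Nat.choose (3 * k) k : ℚ) *
      (Nat.choose n (3 * k) : ℚ) * x ^ (n - 3 * k)

/-- A rational number is `p`-integral if `p` does not divide its denominator
(in lowest terms). -/
def pIntegral (p : ℕ) (a : ℚ) : Prop := ¬ (p : ℕ) ∣ a.den

/-- For `p`-integral rationals `a, b`, `a ≡ b (mod p)` means that `p` divides
the numerator of `a - b` in lowest terms. -/
def ratCongr (p : ℕ) (a b : ℚ) : Prop := (p : ℤ) ∣ (a - b).num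

/-- The Legendre symbol evaluated at the residue of a `p`-integral rational modulo `p`. -/
def legendreRat (p : ℕ) [Fact p.Prime] (a : ℚ) : ℤ :=
  legendreSym p (((a : ZMod p).val : ℤ))

open Finset

namespace LSCW

variable {p : ℕ} [hp : Fact p.Prime]

lemma podd (hp2 : p ≠ 2) : p % 2 = 1 :=
  Nat.odd_iff.mp (hp.out.odd_of_ne_two hp2)

lemma natCast_ne_zero' {a : ℕ} (h0 : 0 < a) (hlt : a < p) : (a : ZMod p) ≠ 0 := by
  rw [Ne, ZMod.natCast_eq_zero_iff]
  intro hdvd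
  exact absurd (Nat.le_of_dvd h0 hdvd) (by omega)

lemma carryK {a b : ℕ} (ha : a < p) (hb : b < p) (hab : p ≤ a + b) :
    (((a + b).choose a : ℕ) : ZMod p) = 0 := by
  rw [ZMod.natCast_eq_zero_iff]
  exact hp.out.dvd_choose_add ha hb hab

lemma cb_vanish (hp2 : p ≠ 2) {k : ℕ} (h1 : (p - 1) / 2 < k) (h2 : k < p) :
    (((2 * k).choose k : ℕ) : ZMod p) = 0 := by
  have hmod := podd hp2
  have h2k : 2 * k = k + k := by ring
  rw [h2k]
  exact carryK h2 h2 (by omega)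

lemma triple_vanish (hp2 : p ≠ 2) {k : ℕ} (h1 : (p - 1) / 2 < 3 * k) (h2 : k < p) :
    (((2 * k).choose k : ℕ) : ZMod p) * ((3 * k).choose k : ℕ) * ((6 * k).choose (3 * k) : ℕ)
      = 0 := by
  have hmod := podd hp2
  by_cases hA : p ≤ 2 * k
  · rw [cb_vanish hp2 (by omega) h2, zero_mul, zero_mul]
  · push_neg at hA
    by_cases hB : p ≤ 3 * k
    · have h3 : 3 * k = k + 2 * k := by ring
      rw [h3, carryK (by omega) (by omega) (by omega), mul_zero, zero_mul]
    · push_neg at hB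
      have h6 : 6 * k = 3 * k + 3 * k := by ring
      rw [h6, carryK (by omega) (by omega) (by omega), mul_zero]

lemma lemA (hp2 : p ≠ 2) {m : ℕ} (hm : m ≤ (p - 1) / 2) :
    ∀ k, m ≤ k → k < p →
      (((2 * k).choose k : ℕ) : ZMod p) * (k.choose m : ℕ)
        = (((2 * m).choose m : ℕ) : ZMod p) * (-4) ^ (k - m) *
          (((p - 1) / 2 - m).choose (k - m) : ℕ) := by
  have hmod := podd hp2
  intro k hk
  induction k, hk using Nat.le_induction with
  | base => intro _; simp
  | succ k hk ih =>
    intro hkp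
    have ihk := ih (by omega)
    set q : ℕ := (p - 1) / 2 with hq
    have e1 : (2 * (k + 1)).choose (k + 1) * (k + 1) = 2 * (2 * k + 1) * ((2 * k).choose k) := by
      have := Nat.succ_mul_centralBinom_succ k
      simpa [Nat.centralBinom, mul_comm] using this
    have e2 : k.choose m * (k + 1) = (k + 1).choose m * (k + 1 - m) :=
      Nat.choose_mul_succ_eq k m
    have hc1 : ((k + 1 : ℕ) : ZMod p) ≠ 0 := natCast_ne_zero' (by omega) (by omega)
    have hc2 : ((k + 1 - m : ℕ) : ZMod p) ≠ 0 := natCast_ne_zero' (by omega) (by omega)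
    have hQ : 2 * ((q : ℕ) : ZMod p) + 1 = 0 := by
      have h0 : ((2 * q + 1 : ℕ) : ZMod p) = ((p : ℕ) : ZMod p) := by congr 1; omega
      rw [ZMod.natCast_self] at h0
      push_cast at h0
      exact h0
    have key : (2 * (2 * (k : ZMod p) + 1)) * (((q - m).choose (k - m) : ℕ) : ZMod p)
        = (-4) * ((k + 1 - m : ℕ) : ZMod p) * (((q - m).choose (k + 1 - m) : ℕ) : ZMod p) := by
      have hsub : k + 1 - m = (k - m) + 1 := by omega
      rw [hsub]
      have e3 : (q - m).choose ((k - m) + 1) * ((k - m) + 1)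
          = (q - m).choose (k - m) * ((q - m) - (k - m)) :=
        Nat.choose_succ_right_eq _ _
      by_cases hkq : k ≤ q
      · have hsub2 : ((q - m) - (k - m) : ℕ) = q - k := by omega
        rw [hsub2] at e3
        have e3' := congrArg (Nat.cast (R := ZMod p)) e3
        push_cast [Nat.cast_sub (show k ≤ q by omega)] at e3'
        push_cast
        linear_combination (4 : ZMod p) * e3'
          + (2 * (((q - m).choose (k - m) : ℕ) : ZMod p)) * hQ
      · have hz1 : (q - m).choose (k - m) = 0 := Nat.choose_eq_zero_of_lt (by omega)
        have hz2 : (q - m).choose ((k - m) + 1) = 0 := Nat.choose_eq_zero_of_lt (by omega)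
        rw [hz1, hz2]
        push_cast
        ring
    have hpow : ((-4 : ZMod p)) ^ (k + 1 - m) = (-4) ^ (k - m) * (-4) := by
      have h' : k + 1 - m = (k - m) + 1 := by omega
      rw [h', pow_succ]
    have E1 := congrArg (Nat.cast (R := ZMod p)) e1
    have E2 := congrArg (Nat.cast (R := ZMod p)) e2
    push_cast at E1 E2
    apply mul_left_cancel₀ (mul_ne_zero hc1 hc2)
    rw [hpow]
    push_cast
    linear_combination (((k + 1 - m : ℕ) : ZMod p) * (((k + 1).choose m : ℕ) : ZMod p)) * E1
      + (-(2 * (2 * (k : ZMod p) + 1) * (((2 * k).choose k : ℕ) : ZMod p))) * E2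
      + (((k : ZMod p) + 1) * (2 * (2 * (k : ZMod p) + 1))) * ihk
      + (((k : ZMod p) + 1) * (((2 * m).choose m : ℕ) : ZMod p) * ((-4 : ZMod p)) ^ (k - m)) * key

lemma sumA (hp2 : p ≠ 2) {m : ℕ} (hm : m ≤ (p - 1) / 2) (u v : ZMod p) :
    ∑ k ∈ range p, (((2 * k).choose k : ℕ) : ZMod p) * (k.choose m : ℕ) * u ^ (k - m) * v ^ k
      = (((2 * m).choose m : ℕ) : ZMod p) * v ^ m * (1 - 4 * u * v) ^ ((p - 1) / 2 - m) := by
  have hmod := podd hp2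
  set q : ℕ := (p - 1) / 2 with hq
  have hmp : m ≤ p := by omega
  have hqp : q < p := by omega
  rw [range_eq_Ico, ← Finset.sum_Ico_consecutive _ (Nat.zero_le m) (by omega : m ≤ p)]
  have h1 : ∑ k ∈ Finset.Ico 0 m,
      (((2 * k).choose k : ℕ) : ZMod p) * (k.choose m : ℕ) * u ^ (k - m) * v ^ k = 0 := by
    apply Finset.sum_eq_zero
    intro k hk
    rw [Finset.mem_Ico] at hk
    rw [Nat.choose_eq_zero_of_lt hk.2]
    push_cast
    ring
  rw [h1, zero_add, Finset.sum_Ico_eq_sum_range]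
  have h2 : ∀ i ∈ range (p - m),
      (((2 * (m + i)).choose (m + i) : ℕ) : ZMod p) * ((m + i).choose m : ℕ) * u ^ ((m + i) - m)
          * v ^ (m + i)
        = (((2 * m).choose m : ℕ) : ZMod p) * v ^ m *
            (((q - m).choose i : ℕ) * ((-4) * u * v) ^ i) := by
    intro i hi
    rw [Finset.mem_range] at hi
    have hA := lemA hp2 hm (m + i) (by omega) (by omega)
    have hsub : m + i - m = i := by omega
    rw [hsub] at hA ⊢
    rw [hA]
    rw [mul_pow, mul_pow, pow_add]
    ring
  rw [Finset.sum_congr rfl h2, ← Finset.mul_sum]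
  congr 1
  have h3 : ∑ i ∈ range (p - m), (((q - m).choose i : ℕ) : ZMod p) * ((-4) * u * v) ^ i
      = ∑ i ∈ range ((q - m) + 1), (((q - m).choose i : ℕ) : ZMod p) * ((-4) * u * v) ^ i := by
    symm
    apply Finset.sum_subset
    · apply Finset.range_subset_range.mpr; omega
    · intro i _ hi
      rw [Finset.mem_range, not_lt] at hi
      rw [Nat.choose_eq_zero_of_lt (by omega)]
      push_cast
      ring
  rw [h3]
  have h4 := add_pow ((-4) * u * v) 1 (q - m)
  simp only [one_pow, mul_one] at h4
  have : (1 : ZMod p) - 4 * u * v = (-4) * u * v + 1 := by ring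
  rw [this, h4]
  apply Finset.sum_congr rfl
  intro i _
  ring

lemma lemB (hp2 : p ≠ 2) : ∀ j : ℕ, 3 * j ≤ (p - 1) / 2 →
    ((-1 : ZMod p)) ^ j * 64 ^ j * ((((p - 1) / 2).choose (3 * j) : ℕ) : ZMod p)
      = (((6 * j).choose (3 * j) : ℕ) : ZMod p) := by
  have hmod := podd hp2
  intro j
  induction j with
  | zero => intro _; simp
  | succ j ih =>
    intro hj
    have hj' : 3 * j ≤ (p - 1) / 2 := by omega
    have ihj := ih hj'
    set q : ℕ := (p - 1) / 2 with hq
    have hQ : 2 * ((q : ℕ) : ZMod p) + 1 = 0 := by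
      have h0 : ((2 * q + 1 : ℕ) : ZMod p) = ((p : ℕ) : ZMod p) := by congr 1; omega
      rw [ZMod.natCast_self] at h0
      push_cast at h0
      exact h0
    -- ℕ identities for the choose at q
    have f1 : q.choose (3 * j + 1) * (3 * j + 1) = q.choose (3 * j) * (q - 3 * j) :=
      Nat.choose_succ_right_eq _ _
    have f2 : q.choose (3 * j + 2) * (3 * j + 2) = q.choose (3 * j + 1) * (q - (3 * j + 1)) :=
      Nat.choose_succ_right_eq _ _
    have f3 : q.choose (3 * j + 3) * (3 * j + 3) = q.choose (3 * j + 2) * (q - (3 * j + 2)) :=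
      Nat.choose_succ_right_eq _ _
    -- central binomial identities
    have g1 : (3 * j + 1) * Nat.centralBinom (3 * j + 1)
        = 2 * (2 * (3 * j) + 1) * Nat.centralBinom (3 * j) :=
      Nat.succ_mul_centralBinom_succ (3 * j)
    have g2 : (3 * j + 2) * Nat.centralBinom (3 * j + 2)
        = 2 * (2 * (3 * j + 1) + 1) * Nat.centralBinom (3 * j + 1) :=
      Nat.succ_mul_centralBinom_succ (3 * j + 1)
    have g3 : (3 * j + 3) * Nat.centralBinom (3 * j + 3)
        = 2 * (2 * (3 * j + 2) + 1) * Nat.centralBinom (3 * j + 2) :=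
      Nat.succ_mul_centralBinom_succ (3 * j + 2)
    have hcb : ∀ a : ℕ, Nat.centralBinom a = (2 * a).choose a := fun a => rfl
    have hc1 : ((3 * j + 1 : ℕ) : ZMod p) ≠ 0 := natCast_ne_zero' (by omega) (by omega)
    have hc2 : ((3 * j + 2 : ℕ) : ZMod p) ≠ 0 := natCast_ne_zero' (by omega) (by omega)
    have hc3 : ((3 * j + 3 : ℕ) : ZMod p) ≠ 0 := natCast_ne_zero' (by omega) (by omega)
    -- cast versions
    have F1 := congrArg (Nat.cast (R := ZMod p)) f1
    have F2 := congrArg (Nat.cast (R := ZMod p)) f2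
    have F3 := congrArg (Nat.cast (R := ZMod p)) f3
    have G1 := congrArg (Nat.cast (R := ZMod p)) g1
    have G2 := congrArg (Nat.cast (R := ZMod p)) g2
    have G3 := congrArg (Nat.cast (R := ZMod p)) g3
    simp only [hcb] at G1 G2 G3
    have hs1 : ((q - 3 * j : ℕ) : ZMod p) = (q : ZMod p) - 3 * j := by
      rw [Nat.cast_sub (by omega)]; push_cast; ring
    have hs2 : ((q - (3 * j + 1) : ℕ) : ZMod p) = (q : ZMod p) - (3 * j + 1) := by
      rw [Nat.cast_sub (by omega)]; push_cast; ring
    have hs3 : ((q - (3 * j + 2) : ℕ) : ZMod p) = (q : ZMod p) - (3 * j + 2) := by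
      rw [Nat.cast_sub (by omega)]; push_cast; ring
    push_cast [hs1, hs2, hs3] at F1 F2 F3 G1 G2 G3
    -- pass to the field
    have e6 : (6 * (j + 1)) = 2 * (3 * j + 3) := by ring
    have e3 : (3 * (j + 1)) = 3 * j + 3 := by ring
    rw [e6, e3]
    apply mul_left_cancel₀ (mul_ne_zero (mul_ne_zero hc1 hc2) hc3)
    push_cast
    -- Left side: use F1, F2, F3 and ihj; right side: use G1, G2, G3 and hQ.
    -- We show: c1*c2*c3 * ((-1)^(j+1) * 64^(j+1) * C(q,3j+3)) = c1*c2*c3 * C(6j+6,3j+3)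
    have pow1 : ((-1 : ZMod p)) ^ (j + 1) = (-1) ^ j * (-1) := pow_succ _ _
    have pow2 : ((64 : ZMod p)) ^ (j + 1) = 64 ^ j * 64 := pow_succ _ _
    rw [pow1, pow2]
    have h63 : 2 * (3 * j) = 6 * j := by ring
    rw [h63] at G1
    linear_combination (-64 * ((-1 : ZMod p)) ^ j * 64 ^ j * (3 * (j : ZMod p) + 1) *
          (3 * (j : ZMod p) + 2)) * F3
      + (-64 * ((-1 : ZMod p)) ^ j * 64 ^ j * (3 * (j : ZMod p) + 1) *
          ((q : ZMod p) - (3 * (j : ZMod p) + 2))) * F2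
      + (-64 * ((-1 : ZMod p)) ^ j * 64 ^ j * ((q : ZMod p) - (3 * (j : ZMod p) + 1)) *
          ((q : ZMod p) - (3 * (j : ZMod p) + 2))) * F1
      + (-64 * ((q : ZMod p) - 3 * (j : ZMod p)) * ((q : ZMod p) - (3 * (j : ZMod p) + 1)) *
          ((q : ZMod p) - (3 * (j : ZMod p) + 2))) * ihj
      + (-((3 * (j : ZMod p) + 1) * (3 * (j : ZMod p) + 2))) * G3
      + (-2 * (6 * (j : ZMod p) + 5) * (3 * (j : ZMod p) + 1)) * G2
      + (-4 * (6 * (j : ZMod p) + 3) * (6 * (j : ZMod p) + 5)) * G1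
      + (-8 * (-(2 * (q : ZMod p) + 1) ^ 2 + 3 * (2 * (q : ZMod p) + 1) * (6 * (j : ZMod p) + 1)
            + 6 * (2 * (q : ZMod p) + 1) - 3 * (6 * (j : ZMod p) + 1) ^ 2
            - 12 * (6 * (j : ZMod p) + 1) - 8) *
          (((6 * j).choose (3 * j) : ℕ) : ZMod p)) * hQ
      + ((-64 * (q : ZMod p) ^ 2 + (576 * (j : ZMod p) + 224) * (q : ZMod p)
            - 1728 * (j : ZMod p) ^ 2 - 1440 * (j : ZMod p) - 240) *
          (((6 * j).choose (3 * j) : ℕ) : ZMod p)) * hQ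



lemma two_ne_zero' (hp2 : p ≠ 2) : ((2 : ℕ) : ZMod p) ≠ 0 :=
  natCast_ne_zero' (by omega) (by have := hp.out.two_le; omega)

lemma four_pow (hp2 : p ≠ 2) : ((4 : ZMod p)) ^ ((p - 1) / 2) = 1 := by
  have hmod := podd hp2
  have h2 : ((2 : ZMod p)) ≠ 0 := by
    have := two_ne_zero' (p := p) hp2
    push_cast at this
    exact this
  have h4 : ((4 : ZMod p)) = 2 ^ 2 := by norm_num
  rw [h4, ← pow_mul]
  have : 2 * ((p - 1) / 2) = p - 1 := by omega
  rw [this]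
  exact ZMod.pow_card_sub_one_eq_one h2

/-- The target quantity. -/
def T (N : ZMod p) : ZMod p :=
  ∑ j ∈ range ((p - 1) / 2 / 3 + 1),
    (((2 * j).choose j : ℕ) : ZMod p) * ((3 * j).choose j : ℕ) * ((6 * j).choose (3 * j) : ℕ) *
      N ^ ((p - 1) / 2 - 3 * j)

lemma G1 (hp2 : p ≠ 2) (N X W : ZMod p) (hW : (N + 4 * X) * W = 1) :
    (N + 4 * X) ^ ((p - 1) / 2) *
      ∑ k ∈ range p, (((2 * k).choose k : ℕ) : ZMod p) *
        (∑ j ∈ range (k / 3 + 1),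
          (((2 * j).choose j : ℕ) : ZMod p) * ((3 * j).choose j : ℕ) * (k.choose (3 * j) : ℕ) *
            X ^ (k - 3 * j)) * W ^ k
    = T N := by
  have hmod := podd hp2
  set q : ℕ := (p - 1) / 2 with hq
  have hqp : q < p := by omega
  -- extend the inner sum to `range p`
  have step1 : ∀ k ∈ range p,
      (((2 * k).choose k : ℕ) : ZMod p) *
        (∑ j ∈ range (k / 3 + 1),
          (((2 * j).choose j : ℕ) : ZMod p) * ((3 * j).choose j : ℕ) * (k.choose (3 * j) : ℕ) *
            X ^ (k - 3 * j)) * W ^ k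
      = ∑ j ∈ range p,
          (((2 * j).choose j : ℕ) : ZMod p) * ((3 * j).choose j : ℕ) *
            ((((2 * k).choose k : ℕ) : ZMod p) * (k.choose (3 * j) : ℕ) * X ^ (k - 3 * j) * W ^ k) := by
    intro k hk
    rw [mem_range] at hk
    have hsub : range (k / 3 + 1) ⊆ range p := by
      apply range_subset_range.mpr
      have := Nat.div_le_self k 3
      omega
    rw [← Finset.sum_subset hsub (by
      intro j _ hj
      rw [mem_range, not_lt] at hj
      have h3j : k < 3 * j := by omega
      rw [Nat.choose_eq_zero_of_lt h3j]
      push_cast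
      ring)]
    rw [Finset.mul_sum, Finset.sum_mul]
    apply Finset.sum_congr rfl
    intro j _
    ring
  rw [Finset.sum_congr rfl step1, Finset.sum_comm]
  -- now the outer variable is j
  have step2 : ∀ j ∈ range p,
      (∑ k ∈ range p,
        (((2 * j).choose j : ℕ) : ZMod p) * ((3 * j).choose j : ℕ) *
          ((((2 * k).choose k : ℕ) : ZMod p) * (k.choose (3 * j) : ℕ) * X ^ (k - 3 * j) * W ^ k))
      = (((2 * j).choose j : ℕ) : ZMod p) * ((3 * j).choose j : ℕ) *
          (∑ k ∈ range p,
            (((2 * k).choose k : ℕ) : ZMod p) * (k.choose (3 * j) : ℕ) * X ^ (k - 3 * j) * W ^ k) := by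
    intro j _
    rw [Finset.mul_sum]
  rw [Finset.sum_congr rfl step2]
  -- terms with 3j > q vanish
  have hsub2 : range (q / 3 + 1) ⊆ range p := by
    apply range_subset_range.mpr
    have := Nat.div_le_self q 3
    omega
  rw [← Finset.sum_subset hsub2 (by
    intro j hj hj2
    rw [mem_range] at hj
    rw [mem_range, not_lt] at hj2
    have h3j : q < 3 * j := by omega
    have hz : ∑ k ∈ range p,
        (((2 * k).choose k : ℕ) : ZMod p) * (k.choose (3 * j) : ℕ) * X ^ (k - 3 * j) * W ^ k = 0 := by
      apply Finset.sum_eq_zero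
      intro k hk
      rw [mem_range] at hk
      by_cases hk3 : k < 3 * j
      · rw [Nat.choose_eq_zero_of_lt hk3]; push_cast; ring
      · push_neg at hk3
        rw [cb_vanish hp2 (by omega) hk]
        ring
    rw [hz, mul_zero])]
  -- now apply sumA on each inner sum
  rw [Finset.mul_sum, T]
  apply Finset.sum_congr rfl
  intro j hj
  rw [mem_range] at hj
  have h3j : 3 * j ≤ q := by omega
  rw [sumA hp2 (show 3 * j ≤ (p - 1) / 2 from h3j) X W]
  have h1 : (1 : ZMod p) - 4 * X * W = N * W := by
    have h1' : N * W = (N + 4 * X) * W - 4 * X * W := by ring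
    rw [h1', hW]
  rw [h1, mul_pow]
  have h2m : (2 * (3 * j)).choose (3 * j) = (6 * j).choose (3 * j) := by
    congr 1
    ring
  rw [h2m]
  have hWq : (N + 4 * X) ^ q * (W ^ (3 * j) * W ^ (q - 3 * j)) = 1 := by
    rw [← pow_add, Nat.add_sub_cancel' h3j, ← mul_pow, hW, one_pow]
  simp only [← hq]
  calc (N + 4 * X) ^ q *
        ((((2 * j).choose j : ℕ) : ZMod p) * (((3 * j).choose j : ℕ) : ZMod p) *
          ((((6 * j).choose (3 * j) : ℕ) : ZMod p) * W ^ (3 * j) *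
            (N ^ (q - 3 * j) * W ^ (q - 3 * j))))
      = (((2 * j).choose j : ℕ) : ZMod p) * (((3 * j).choose j : ℕ) : ZMod p) *
          (((6 * j).choose (3 * j) : ℕ) : ZMod p) * N ^ (q - 3 * j) *
          ((N + 4 * X) ^ q * (W ^ (3 * j) * W ^ (q - 3 * j))) := by ring
    _ = (((2 * j).choose j : ℕ) : ZMod p) * (((3 * j).choose j : ℕ) : ZMod p) *
          (((6 * j).choose (3 * j) : ℕ) : ZMod p) * N ^ (q - 3 * j) := by rw [hWq, mul_one]

lemma G2 (hp2 : p ≠ 2) (N Y : ZMod p) (hY : 4 * Y = -N) :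
    ((-1 : ZMod p)) ^ ((p - 1) / 2) *
      ∑ j ∈ range ((p - 1) / 2 / 3 + 1),
        (((2 * j).choose j : ℕ) : ZMod p) * ((3 * j).choose j : ℕ) *
          ((((p - 1) / 2).choose (3 * j) : ℕ) : ZMod p) * Y ^ ((p - 1) / 2 - 3 * j)
    = T N := by
  have hmod := podd hp2
  rw [T, Finset.mul_sum]
  apply Finset.sum_congr rfl
  intro j hj
  rw [mem_range] at hj
  have h3j : 3 * j ≤ (p - 1) / 2 := by omega
  have hB := lemB hp2 j h3j
  have hN : N = (-4) * Y := by linear_combination hY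
  rw [hN]
  rw [mul_pow]
  have h4q : ((-4 : ZMod p)) ^ ((p - 1) / 2 - 3 * j) * ((-4 : ZMod p)) ^ (3 * j)
      = ((-1 : ZMod p)) ^ ((p - 1) / 2) := by
    rw [← pow_add, Nat.sub_add_cancel h3j]
    have : ((-4 : ZMod p)) = (-1) * 4 := by ring
    rw [this, mul_pow, four_pow hp2, mul_one]
  have h64 : ((-4 : ZMod p)) ^ (3 * j) = (-1) ^ j * 64 ^ j := by
    rw [pow_mul, show ((-4 : ZMod p)) ^ 3 = (-1) * 64 by norm_num, mul_pow]
  calc ((-1 : ZMod p)) ^ ((p - 1) / 2) *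
        ((((2 * j).choose j : ℕ) : ZMod p) * ((3 * j).choose j : ℕ) *
          ((((p - 1) / 2).choose (3 * j) : ℕ) : ZMod p) * Y ^ ((p - 1) / 2 - 3 * j))
      = (((-4 : ZMod p)) ^ ((p - 1) / 2 - 3 * j) * ((-4 : ZMod p)) ^ (3 * j)) *
        ((((2 * j).choose j : ℕ) : ZMod p) * ((3 * j).choose j : ℕ) *
          ((((p - 1) / 2).choose (3 * j) : ℕ) : ZMod p) * Y ^ ((p - 1) / 2 - 3 * j)) := by
        rw [h4q]
    _ = (((2 * j).choose j : ℕ) : ZMod p) * ((3 * j).choose j : ℕ) *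
          (((-1 : ZMod p)) ^ j * 64 ^ j * ((((p - 1) / 2).choose (3 * j) : ℕ) : ZMod p)) *
          (((-4 : ZMod p)) ^ ((p - 1) / 2 - 3 * j) * Y ^ ((p - 1) / 2 - 3 * j)) := by
        rw [h64]; ring
    _ = (((2 * j).choose j : ℕ) : ZMod p) * ((3 * j).choose j : ℕ) *
          (((6 * j).choose (3 * j) : ℕ) : ZMod p) *
          (((-4 : ZMod p)) ^ ((p - 1) / 2 - 3 * j) * Y ^ ((p - 1) / 2 - 3 * j)) := by
        linear_combination ((((2 * j).choose j : ℕ) : ZMod p) * (((3 * j).choose j : ℕ) : ZMod p) *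
          (((-4 : ZMod p)) ^ ((p - 1) / 2 - 3 * j) * Y ^ ((p - 1) / 2 - 3 * j))) * hB

lemma G3 (hp2 : p ≠ 2) (N V : ZMod p) (hV : N * V = 1) :
    N ^ ((p - 1) / 2) *
      ∑ k ∈ range p, (((2 * k).choose k : ℕ) : ZMod p) * ((3 * k).choose k : ℕ) *
        ((6 * k).choose (3 * k) : ℕ) * V ^ (3 * k)
    = T N := by
  have hmod := podd hp2
  set q : ℕ := (p - 1) / 2 with hq
  have hsub : range (q / 3 + 1) ⊆ range p := by
    apply range_subset_range.mpr
    have := Nat.div_le_self q 3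
    omega
  rw [← Finset.sum_subset hsub (by
    intro k hk hk2
    rw [mem_range] at hk
    rw [mem_range, not_lt] at hk2
    have h3k : q < 3 * k := by omega
    rw [triple_vanish hp2 h3k hk]
    ring)]
  rw [Finset.mul_sum, T]
  apply Finset.sum_congr rfl
  intro j hj
  rw [mem_range] at hj
  have h3j : 3 * j ≤ q := by omega
  have hpow : N ^ q * V ^ (3 * j) = N ^ (q - 3 * j) := by
    have : N ^ q = N ^ (q - 3 * j) * N ^ (3 * j) := by
      rw [← pow_add, Nat.sub_add_cancel h3j]
    rw [this, mul_assoc, ← mul_pow, hV, one_pow, mul_one]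
  simp only [← hq]
  calc N ^ q * ((((2 * j).choose j : ℕ) : ZMod p) * ((3 * j).choose j : ℕ) *
        ((6 * j).choose (3 * j) : ℕ) * V ^ (3 * j))
      = (((2 * j).choose j : ℕ) : ZMod p) * ((3 * j).choose j : ℕ) *
        ((6 * j).choose (3 * j) : ℕ) * (N ^ q * V ^ (3 * j)) := by ring
    _ = (((2 * j).choose j : ℕ) : ZMod p) * ((3 * j).choose j : ℕ) *
        ((6 * j).choose (3 * j) : ℕ) * N ^ (q - 3 * j) := by rw [hpow]

-- ### Transfer layer via `ℚ_[p]` and `ℤ_[p]`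

lemma coe_sum {ι : Type*} (s : Finset ι) (f : ι → ℤ_[p]) :
    ((∑ i ∈ s, f i : ℤ_[p]) : ℚ_[p]) = ∑ i ∈ s, ((f i : ℚ_[p])) := by
  classical
  induction s using Finset.induction with
  | empty => simp
  | insert _ _ h ih => rw [Finset.sum_insert h, Finset.sum_insert h, PadicInt.coe_add, ih]

lemma ratCast_padic_eq (a : ℚ) : ((a : ℚ_[p])) = ((a.num : ℚ_[p])) / ((a.den : ℚ_[p])) := by
  conv_lhs => rw [← Rat.num_div_den a]
  push_cast
  ring

lemma den_cast_ne_zero (a : ℚ) : ((a.den : ℚ_[p])) ≠ 0 :=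
  Nat.cast_ne_zero.mpr a.den_nz

lemma den_norm_one (a : ℚ) (h : ¬(p : ℕ) ∣ a.den) : ‖((a.den : ℚ_[p]))‖ = 1 := by
  have hcast : (((a.den : ℤ) : ℚ_[p])) = ((a.den : ℚ_[p])) := by push_cast; ring
  refine le_antisymm ?_ ?_
  · rw [← hcast]; exact Padic.norm_int_le_one _
  · by_contra hlt
    push_neg at hlt
    rw [← hcast, Padic.norm_intCast_lt_one_iff] at hlt
    exact h (by exact_mod_cast hlt)

lemma norm_ratCast_le_one (a : ℚ) (h : ¬(p : ℕ) ∣ a.den) : ‖(a : ℚ_[p])‖ ≤ 1 := by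
  rw [ratCast_padic_eq, norm_div, den_norm_one a h, div_one]
  exact Padic.norm_int_le_one _

lemma dvd_num_of_norm_lt_one (a : ℚ) (h : ‖(a : ℚ_[p])‖ < 1) : (p : ℤ) ∣ a.num := by
  rw [← Padic.norm_intCast_lt_one_iff]
  have hden : ‖((a.den : ℚ_[p]))‖ ≤ 1 := by
    have := Padic.norm_int_le_one (p := p) (a.den : ℤ)
    have hcast : (((a.den : ℤ) : ℚ_[p])) = ((a.den : ℚ_[p])) := by push_cast; ring
    rwa [hcast] at this
  have hnum : ((a.num : ℚ_[p])) = (a : ℚ_[p]) * ((a.den : ℚ_[p])) := by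
    rw [ratCast_padic_eq, div_mul_cancel₀ _ (den_cast_ne_zero a)]
  rw [hnum, norm_mul]
  calc ‖(a : ℚ_[p])‖ * ‖((a.den : ℚ_[p]))‖ ≤ ‖(a : ℚ_[p])‖ * 1 :=
        mul_le_mul_of_nonneg_left hden (norm_nonneg _)
    _ < 1 := by rwa [mul_one]

lemma toZMod_eq_zero_iff (z : ℤ_[p]) : PadicInt.toZMod z = 0 ↔ ‖z‖ < 1 := by
  rw [← RingHom.mem_ker, PadicInt.ker_toZMod, PadicInt.maximalIdeal_eq_span_p,
    Ideal.mem_span_singleton, ← PadicInt.norm_lt_one_iff_dvd]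

lemma norm_sub_lt_one_of_toZMod_eq {z w : ℤ_[p]} (h : PadicInt.toZMod z = PadicInt.toZMod w) :
    ‖z - w‖ < 1 := by
  rw [← toZMod_eq_zero_iff, map_sub, sub_eq_zero]
  exact h

lemma ratCast_toZMod (a : ℚ) (ha : ‖(a : ℚ_[p])‖ ≤ 1) :
    ((a : ZMod p)) = PadicInt.toZMod (⟨(a : ℚ_[p]), ha⟩ : ℤ_[p]) := by
  have hden : ¬ (p : ℕ) ∣ a.den := by
    intro hd
    have hnum : ¬ (p : ℤ) ∣ a.num := by
      intro hnum
      have hpd : (p : ℕ) ∣ a.num.natAbs := by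
        have := Int.natAbs_dvd_natAbs.mpr hnum
        simpa using this
      have hco := a.reduced
      have : (p : ℕ) ∣ 1 := hco ▸ Nat.dvd_gcd hpd hd
      exact hp.out.ne_one (Nat.dvd_one.mp this)
    have h1 : ‖((a.num : ℚ_[p]))‖ = 1 := by
      refine le_antisymm (Padic.norm_int_le_one _) (not_lt.mp ?_)
      rw [Padic.norm_intCast_lt_one_iff]
      exact hnum
    have h2 : ‖((a.den : ℚ_[p]))‖ < 1 := by
      have hc : (((a.den : ℤ) : ℚ_[p])) = ((a.den : ℚ_[p])) := by push_cast; ring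
      rw [← hc, Padic.norm_intCast_lt_one_iff]
      exact_mod_cast hd
    have h0 : (0 : ℝ) < ‖((a.den : ℚ_[p]))‖ := norm_pos_iff.mpr (den_cast_ne_zero a)
    have h3 : (1 : ℝ) < ‖(a : ℚ_[p])‖ := by
      rw [ratCast_padic_eq, norm_div, h1]
      exact (one_lt_div h0).mpr h2
    linarith
  have hD : ((a.den : ZMod p)) ≠ 0 := by
    rw [Ne, ZMod.natCast_eq_zero_iff]
    exact hden
  set z : ℤ_[p] := (⟨(a : ℚ_[p]), ha⟩ : ℤ_[p]) with hz
  have hmul : z * ((a.den : ℕ) : ℤ_[p]) = ((a.num : ℤ) : ℤ_[p]) := by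
    apply Subtype.ext
    rw [PadicInt.coe_mul, PadicInt.coe_natCast, PadicInt.coe_intCast]
    show (a : ℚ_[p]) * _ = _
    rw [ratCast_padic_eq, div_mul_cancel₀ _ (den_cast_ne_zero a)]
  have key : PadicInt.toZMod z * ((a.den : ZMod p)) = ((a.num : ZMod p)) := by
    have h' := congrArg PadicInt.toZMod hmul
    rwa [map_mul, map_natCast, map_intCast] at h'
  rw [Rat.cast_def, div_eq_iff hD, key]

lemma legendreRat_cast' (hp2 : p ≠ 2) (a : ℚ) :
    ((legendreSym p (((a : ZMod p).val : ℤ)) : ℤ) : ZMod p) = ((a : ZMod p)) ^ ((p - 1) / 2) := by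
  have hmod := podd hp2
  rw [legendreSym.eq_pow]
  have h1 : (((((a : ZMod p)).val : ℤ)) : ZMod p) = ((a : ZMod p)) := by
    rw [Int.cast_natCast, ZMod.natCast_val, ZMod.cast_id]
  rw [h1]
  congr 1
  omega

end LSCW


open Finset in
lemma LSCW.ratCongr_of_norm_lt {p : ℕ} [hp : Fact p.Prime] (a b : ℚ)
    (h : ‖((a : ℚ_[p])) - (b : ℚ_[p])‖ < 1) : ratCongr p a b := by
  show (p : ℤ) ∣ (a - b).num
  refine LSCW.dvd_num_of_norm_lt_one _ ?_
  have hcast : (((a - b : ℚ)) : ℚ_[p]) = (a : ℚ_[p]) - (b : ℚ_[p]) := by push_cast; ring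
  rw [hcast]
  exact h

theorem legendre_sum_choose_Wgen (p : ℕ) [Fact p.Prime] (hodd : p ≠ 2) (n x : ℚ)
    (hn : pIntegral p n) (hx : pIntegral p x)
    (h : ¬ ratCongr p (n * (n + 4 * x)) 0) :
    ratCongr p
      ((legendreRat p (n + 4 * x) : ℚ) *
        ∑ k ∈ Finset.range p, (Nat.choose (2 * k) k : ℚ) * Wgen k x / (n + 4 * x) ^ k)
      ((-1 : ℚ) ^ ((p - 1) / 2) * Wgen ((p - 1) / 2) (-n / 4)) ∧
    ratCongr p
      ((-1 : ℚ) ^ ((p - 1) / 2) * Wgen ((p - 1) / 2) (-n / 4))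
      ((legendreRat p n : ℚ) *
        ∑ k ∈ Finset.range p,
          (Nat.choose (2 * k) k : ℚ) * (Nat.choose (3 * k) k : ℚ) *
            (Nat.choose (6 * k) (3 * k) : ℚ) / n ^ (3 * k)) := by
  classical
  have hmod : p % 2 = 1 := LSCW.podd hodd
  have hn1 : ‖(n : ℚ_[p])‖ ≤ 1 := LSCW.norm_ratCast_le_one n hn
  have hx1 : ‖(x : ℚ_[p])‖ ≤ 1 := LSCW.norm_ratCast_le_one x hx
  have h4le : ‖((4 : ℚ_[p]))‖ ≤ 1 := by
    have h' := Padic.norm_int_le_one (p := p) (4 : ℤ)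
    simpa using h'
  have hM1 : ‖((n + 4 * x : ℚ) : ℚ_[p])‖ ≤ 1 := by
    have hcast : ((n + 4 * x : ℚ) : ℚ_[p]) = (n : ℚ_[p]) + (4 : ℚ_[p]) * (x : ℚ_[p]) := by
      push_cast; ring
    rw [hcast]
    refine le_trans (Padic.nonarchimedean _ _) (max_le hn1 ?_)
    rw [norm_mul]
    exact mul_le_one₀ h4le (norm_nonneg _) hx1
  have hprod : (1 : ℝ) ≤ ‖(n : ℚ_[p])‖ * ‖((n + 4 * x : ℚ) : ℚ_[p])‖ := by
    by_contra hc
    push_neg at hc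
    apply h
    show (p : ℤ) ∣ (n * (n + 4 * x) - 0).num
    refine LSCW.dvd_num_of_norm_lt_one _ ?_
    have hcast : ((n * (n + 4 * x) - 0 : ℚ) : ℚ_[p])
        = (n : ℚ_[p]) * ((n + 4 * x : ℚ) : ℚ_[p]) := by push_cast; ring
    rw [hcast, norm_mul]
    exact hc
  have hNn : ‖(n : ℚ_[p])‖ = 1 := by
    refine le_antisymm hn1 ?_
    nlinarith [norm_nonneg ((n : ℚ_[p])), norm_nonneg (((n + 4 * x : ℚ) : ℚ_[p]))]
  have hMn : ‖((n + 4 * x : ℚ) : ℚ_[p])‖ = 1 := by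
    refine le_antisymm hM1 ?_
    nlinarith [norm_nonneg ((n : ℚ_[p])), norm_nonneg (((n + 4 * x : ℚ) : ℚ_[p]))]
  have hMne : ((n + 4 * x : ℚ) : ℚ_[p]) ≠ 0 := by
    intro h0; rw [h0, norm_zero] at hMn; norm_num at hMn
  have hNne : ((n : ℚ_[p])) ≠ 0 := by
    intro h0; rw [h0, norm_zero] at hNn; norm_num at hNn
  have hp4 : ¬ (p : ℕ) ∣ 4 := by
    intro hd
    have hd' : (p : ℕ) ∣ 2 ^ 2 := by
      have h22 : (4 : ℕ) = 2 ^ 2 := by norm_num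
      rwa [h22] at hd
    have hle := Nat.le_of_dvd (by norm_num) ((Fact.out : p.Prime).dvd_of_dvd_pow hd')
    have h2 := (Fact.out : p.Prime).two_le
    omega
  have h4 : ‖((4 : ℚ_[p]))‖ = 1 := by
    refine le_antisymm h4le (not_lt.mp ?_)
    intro hlt
    have hc : ((4 : ℚ_[p])) = (((4 : ℤ)) : ℚ_[p]) := by norm_num
    rw [hc, Padic.norm_intCast_lt_one_iff] at hlt
    exact hp4 (by exact_mod_cast hlt)
  have hy1 : ‖((-n / 4 : ℚ) : ℚ_[p])‖ ≤ 1 := by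
    have hcast : ((-n / 4 : ℚ) : ℚ_[p]) = -(n : ℚ_[p]) / (4 : ℚ_[p]) := by push_cast; ring
    rw [hcast, norm_div, norm_neg, h4, div_one]
    exact hn1
  -- the `ℤ_[p]` elements
  let nZ : ℤ_[p] := ⟨(n : ℚ_[p]), hn1⟩
  let xZ : ℤ_[p] := ⟨(x : ℚ_[p]), hx1⟩
  let MZ : ℤ_[p] := ⟨((n + 4 * x : ℚ) : ℚ_[p]), hM1⟩
  let wZ : ℤ_[p] := ⟨(((n + 4 * x : ℚ) : ℚ_[p]))⁻¹, by rw [norm_inv, hMn]; norm_num⟩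
  let vZ : ℤ_[p] := ⟨((n : ℚ_[p]))⁻¹, by rw [norm_inv, hNn]; norm_num⟩
  let yZ : ℤ_[p] := ⟨((-n / 4 : ℚ) : ℚ_[p]), hy1⟩
  have hMZ : MZ = nZ + 4 * xZ := by
    apply Subtype.ext
    show ((n + 4 * x : ℚ) : ℚ_[p]) = ((nZ + 4 * xZ : ℤ_[p]) : ℚ_[p])
    rw [PadicInt.coe_add, PadicInt.coe_mul]
    show _ = (nZ : ℚ_[p]) + ((4 : ℤ_[p]) : ℚ_[p]) * (xZ : ℚ_[p])
    have h4' : ((4 : ℤ_[p]) : ℚ_[p]) = 4 := by norm_cast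
    rw [h4']
    push_cast
    ring
  have hMZn : ‖MZ‖ = 1 := by rw [PadicInt.norm_def]; exact hMn
  have hnZn : ‖nZ‖ = 1 := by rw [PadicInt.norm_def]; exact hNn
  have hMw : MZ * wZ = 1 := by
    apply Subtype.ext
    rw [PadicInt.coe_mul, PadicInt.coe_one]
    exact mul_inv_cancel₀ hMne
  have hNv : nZ * vZ = 1 := by
    apply Subtype.ext
    rw [PadicInt.coe_mul, PadicInt.coe_one]
    exact mul_inv_cancel₀ hNne
  have h4y : (4 : ℤ_[p]) * yZ = -nZ := by
    apply Subtype.ext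
    rw [PadicInt.coe_mul, PadicInt.coe_neg]
    show ((4 : ℤ_[p]) : ℚ_[p]) * ((-n / 4 : ℚ) : ℚ_[p]) = -((n : ℚ_[p]))
    have h4' : ((4 : ℤ_[p]) : ℚ_[p]) = 4 := by norm_cast
    rw [h4']
    have hcast : ((-n / 4 : ℚ) : ℚ_[p]) = -(n : ℚ_[p]) / (4 : ℚ_[p]) := by push_cast; ring
    rw [hcast]
    have h40 : (4 : ℚ_[p]) ≠ 0 := by norm_num
    field_simp
  -- residues mod p
  set NK : ZMod p := PadicInt.toZMod nZ with hNKdef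
  set XK : ZMod p := PadicInt.toZMod xZ with hXKdef
  set WK : ZMod p := PadicInt.toZMod wZ with hWKdef
  set VK : ZMod p := PadicInt.toZMod vZ with hVKdef
  set YK : ZMod p := PadicInt.toZMod yZ with hYKdef
  have hMK : PadicInt.toZMod MZ = NK + 4 * XK := by
    rw [hMZ, map_add, map_mul, map_ofNat]
  have hWKe : (NK + 4 * XK) * WK = 1 := by
    rw [← hMK, hWKdef, ← map_mul, hMw, map_one]
  have hVKe : NK * VK = 1 := by
    rw [hNKdef, hVKdef, ← map_mul, hNv, map_one]
  have hYKe : (4 : ZMod p) * YK = -NK := by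
    have h4' : (4 : ZMod p) = PadicInt.toZMod (4 : ℤ_[p]) := (map_ofNat _ 4).symm
    rw [h4', hYKdef, ← map_mul, h4y, map_neg, hNKdef]
  -- Legendre symbols
  have hlegM : ((legendreRat p (n + 4 * x) : ℤ) : ZMod p) = (NK + 4 * XK) ^ ((p - 1) / 2) := by
    rw [legendreRat, LSCW.legendreRat_cast' hodd, ← hMK]
    congr 1
    rw [LSCW.ratCast_toZMod _ hM1]
  have hlegN : ((legendreRat p n : ℤ) : ZMod p) = NK ^ ((p - 1) / 2) := by
    rw [legendreRat, LSCW.legendreRat_cast' hodd, hNKdef]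
    congr 1
    rw [LSCW.ratCast_toZMod _ hn1]
  -- `ℤ_[p]` versions of the three quantities
  let EA : ℤ_[p] := ((legendreRat p (n + 4 * x) : ℤ) : ℤ_[p]) *
      ∑ k ∈ Finset.range p, (((2 * k).choose k : ℕ) : ℤ_[p]) *
        (∑ j ∈ Finset.range (k / 3 + 1),
          (((2 * j).choose j : ℕ) : ℤ_[p]) * (((3 * j).choose j : ℕ) : ℤ_[p]) *
            ((k.choose (3 * j) : ℕ) : ℤ_[p]) * xZ ^ (k - 3 * j)) * wZ ^ k
  let EB : ℤ_[p] := (-1 : ℤ_[p]) ^ ((p - 1) / 2) *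
      ∑ j ∈ Finset.range ((p - 1) / 2 / 3 + 1),
        (((2 * j).choose j : ℕ) : ℤ_[p]) * (((3 * j).choose j : ℕ) : ℤ_[p]) *
          ((((p - 1) / 2).choose (3 * j) : ℕ) : ℤ_[p]) * yZ ^ ((p - 1) / 2 - 3 * j)
  let EC : ℤ_[p] := ((legendreRat p n : ℤ) : ℤ_[p]) *
      ∑ k ∈ Finset.range p, (((2 * k).choose k : ℕ) : ℤ_[p]) * (((3 * k).choose k : ℕ) : ℤ_[p]) *
        (((6 * k).choose (3 * k) : ℕ) : ℤ_[p]) * vZ ^ (3 * k)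
  -- cast identities
  have hEAcast : (((legendreRat p (n + 4 * x) : ℚ) *
      ∑ k ∈ Finset.range p, ((2 * k).choose k : ℚ) * Wgen k x / (n + 4 * x) ^ k : ℚ) : ℚ_[p])
      = ((EA : ℤ_[p]) : ℚ_[p]) := by
    show _ = ((((legendreRat p (n + 4 * x) : ℤ) : ℤ_[p]) * _ : ℤ_[p]) : ℚ_[p])
    rw [Rat.cast_mul, Rat.cast_sum, PadicInt.coe_mul, LSCW.coe_sum]
    rw [show ((legendreRat p (n + 4 * x) : ℚ) : ℚ_[p])
        = (((legendreRat p (n + 4 * x) : ℤ) : ℤ_[p]) : ℚ_[p]) from by push_cast; ring]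
    congr 1
    apply Finset.sum_congr rfl
    intro k _
    · rw [Rat.cast_div, Rat.cast_mul, Rat.cast_pow, Rat.cast_natCast,
        PadicInt.coe_mul, PadicInt.coe_mul, PadicInt.coe_pow, PadicInt.coe_natCast]
      rw [div_eq_mul_inv]
      have hw : (wZ : ℚ_[p]) = (((n + 4 * x : ℚ) : ℚ_[p]))⁻¹ := rfl
      rw [hw, ← inv_pow]
      congr 2
      rw [Wgen, Rat.cast_sum, LSCW.coe_sum]
      apply Finset.sum_congr rfl
      intro j _
      rw [Rat.cast_mul, Rat.cast_mul, Rat.cast_mul, Rat.cast_pow, Rat.cast_natCast,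
        Rat.cast_natCast, Rat.cast_natCast, PadicInt.coe_mul, PadicInt.coe_mul,
        PadicInt.coe_mul, PadicInt.coe_pow, PadicInt.coe_natCast, PadicInt.coe_natCast,
        PadicInt.coe_natCast]
  have hEBcast : (((((-1 : ℚ)) ^ ((p - 1) / 2) * Wgen ((p - 1) / 2) (-n / 4) : ℚ)) : ℚ_[p])
      = ((EB : ℤ_[p]) : ℚ_[p]) := by
    show _ = (((-1 : ℤ_[p]) ^ ((p - 1) / 2) * _ : ℤ_[p]) : ℚ_[p])
    rw [Rat.cast_mul, PadicInt.coe_mul, PadicInt.coe_pow]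
    rw [show (((( -1 : ℚ)) ^ ((p - 1) / 2) : ℚ) : ℚ_[p]) = ((-1 : ℤ_[p]) : ℚ_[p]) ^ ((p - 1) / 2)
        from by push_cast; ring]
    congr 1
    · rw [Wgen, Rat.cast_sum, LSCW.coe_sum]
      apply Finset.sum_congr rfl
      intro j _
      rw [Rat.cast_mul, Rat.cast_mul, Rat.cast_mul, Rat.cast_pow, Rat.cast_natCast,
        Rat.cast_natCast, Rat.cast_natCast, PadicInt.coe_mul, PadicInt.coe_mul,
        PadicInt.coe_mul, PadicInt.coe_pow, PadicInt.coe_natCast, PadicInt.coe_natCast,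
        PadicInt.coe_natCast]
  have hECcast : (((legendreRat p n : ℚ) *
      ∑ k ∈ Finset.range p, ((2 * k).choose k : ℚ) * ((3 * k).choose k : ℚ) *
        ((6 * k).choose (3 * k) : ℚ) / n ^ (3 * k) : ℚ) : ℚ_[p])
      = ((EC : ℤ_[p]) : ℚ_[p]) := by
    show _ = ((((legendreRat p n : ℤ) : ℤ_[p]) * _ : ℤ_[p]) : ℚ_[p])
    rw [Rat.cast_mul, Rat.cast_sum, PadicInt.coe_mul, LSCW.coe_sum]
    rw [show ((legendreRat p n : ℚ) : ℚ_[p])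
        = (((legendreRat p n : ℤ) : ℤ_[p]) : ℚ_[p]) from by push_cast; ring]
    congr 1
    apply Finset.sum_congr rfl
    intro k _
    · rw [Rat.cast_div, Rat.cast_mul, Rat.cast_mul, Rat.cast_pow, Rat.cast_natCast,
        Rat.cast_natCast, Rat.cast_natCast, PadicInt.coe_mul, PadicInt.coe_mul,
        PadicInt.coe_mul, PadicInt.coe_pow, PadicInt.coe_natCast, PadicInt.coe_natCast,
        PadicInt.coe_natCast]
      rw [div_eq_mul_inv]
      have hv : (vZ : ℚ_[p]) = ((n : ℚ_[p]))⁻¹ := rfl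
      rw [hv, ← inv_pow]
  -- residues of the three quantities
  have hEAz : PadicInt.toZMod EA = LSCW.T (NK) := by
    show PadicInt.toZMod (((legendreRat p (n + 4 * x) : ℤ) : ℤ_[p]) * _) = _
    rw [map_mul, map_intCast, map_sum, hlegM]
    rw [← LSCW.G1 hodd NK XK WK hWKe]
    congr 1
    apply Finset.sum_congr rfl
    intro k _
    rw [map_mul, map_mul, map_pow, map_natCast, map_sum]
    congr 2
    apply Finset.sum_congr rfl
    intro j _
    rw [map_mul, map_mul, map_mul, map_pow, map_natCast, map_natCast, map_natCast]
  have hEBz : PadicInt.toZMod EB = LSCW.T (NK) := by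
    show PadicInt.toZMod ((-1 : ℤ_[p]) ^ ((p - 1) / 2) * _) = _
    rw [map_mul, map_pow, map_neg, map_one, map_sum]
    rw [← LSCW.G2 hodd NK YK hYKe]
    congr 1
    apply Finset.sum_congr rfl
    intro j _
    rw [map_mul, map_mul, map_mul, map_pow, map_natCast, map_natCast, map_natCast]
  have hECz : PadicInt.toZMod EC = LSCW.T (NK) := by
    show PadicInt.toZMod (((legendreRat p n : ℤ) : ℤ_[p]) * _) = _
    rw [map_mul, map_intCast, map_sum, hlegN]
    rw [← LSCW.G3 hodd NK VK hVKe]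
    congr 1
    apply Finset.sum_congr rfl
    intro k _
    rw [map_mul, map_mul, map_mul, map_pow, map_natCast, map_natCast, map_natCast]
  constructor
  · refine LSCW.ratCongr_of_norm_lt _ _ ?_
    rw [hEAcast, hEBcast, ← PadicInt.coe_sub, PadicInt.padic_norm_e_of_padicInt]
    exact LSCW.norm_sub_lt_one_of_toZMod_eq (by rw [hEAz, hEBz])
  · refine LSCW.ratCongr_of_norm_lt _ _ ?_
    rw [hEBcast, hECcast, ← PadicInt.coe_sub, PadicInt.padic_norm_e_of_padicInt]
    exact LSCW.norm_sub_lt_one_of_toZMod_eq (by rw [hEBz, hECz])
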